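/- arXiv:2312.02727 — 4 statements merged into one kernel-verified Lean document; each statement's English description precedes it below -/
import Mathlib

section
/- Let ω > 0, x, e ∈ ℝ³ and set v = F_ω(x) + e. Then for every t ≥ 0, the traveled distance satisfies D_{x,v}^ω(t) = ∫₀^t ‖v − F_ω(x + s v)‖ ds ≤ ‖e‖·(t + ω t²/2) + (ω² t²/2)·d_r(x). -/
noncomputable def vec3 (a b c : ℝ) : EuclideanSpace ℝ (Fin 3) := WithLp.toLp 2 ![a, b, c]

noncomputable def Frot (ω : ℝ) (y : EuclideanSpace ℝ (Fin 3)) : EuclideanSpace ℝ (Fin 3) :=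
  vec3 (-ω * y 1) (ω * y 0) 0

noncomputable def dr (x : EuclideanSpace ℝ (Fin 3)) : ℝ :=
  Real.sqrt (x 0 ^ 2 + x 1 ^ 2)

noncomputable def Dtrav (ω : ℝ) (x v : EuclideanSpace ℝ (Fin 3)) (t : ℝ) : ℝ :=
  ∫ s in (0 : ℝ)..t, ‖v - Frot ω (x + s • v)‖

lemma frot_apply0 (ω : ℝ) (y : EuclideanSpace ℝ (Fin 3)) : Frot ω y 0 = -ω * y 1 := by
  simp [Frot, vec3]

lemma frot_apply1 (ω : ℝ) (y : EuclideanSpace ℝ (Fin 3)) : Frot ω y 1 = ω * y 0 := by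
  simp [Frot, vec3]

lemma frot_apply2 (ω : ℝ) (y : EuclideanSpace ℝ (Fin 3)) : Frot ω y 2 = 0 := by
  simp [Frot, vec3]

lemma norm_frot (ω : ℝ) (hω : 0 ≤ ω) (y : EuclideanSpace ℝ (Fin 3)) :
    ‖Frot ω y‖ = ω * Real.sqrt (y 0 ^ 2 + y 1 ^ 2) := by
  rw [EuclideanSpace.norm_eq, Fin.sum_univ_three, frot_apply0, frot_apply1, frot_apply2]
  simp only [Real.norm_eq_abs, sq_abs]
  rw [show (-ω * y 1) ^ 2 + (ω * y 0) ^ 2 + (0:ℝ) ^ 2 = ω ^ 2 * (y 0 ^ 2 + y 1 ^ 2) by ring]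
  rw [Real.sqrt_mul (sq_nonneg ω), Real.sqrt_sq hω]

theorem stmt_3 (ω : ℝ) (hω : 0 < ω) (x e : EuclideanSpace ℝ (Fin 3))
    (v : EuclideanSpace ℝ (Fin 3)) (hv : v = Frot ω x + e) :
    ∀ t : ℝ, 0 ≤ t →
      Dtrav ω x v t ≤ ‖e‖ * (t + ω * t ^ 2 / 2) + ω ^ 2 * t ^ 2 / 2 * dr x := by
  intro t ht
  set w : EuclideanSpace ℝ (Fin 3) := Frot ω v with hw
  -- pointwise rewrite of the integrand
  have key : ∀ s : ℝ, v - Frot ω (x + s • v) = e - s • w := by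
    intro s
    ext i
    fin_cases i <;>
      simp [hw, hv, frot_apply0, frot_apply1, frot_apply2, Frot, vec3,
        PiLp.add_apply, PiLp.sub_apply, PiLp.smul_apply, smul_eq_mul] <;> ring
  -- bound on ‖w‖
  have hee : e 0 ^ 2 + e 1 ^ 2 ≤ ‖e‖ ^ 2 := by
    rw [EuclideanSpace.norm_eq, Real.sq_sqrt (by positivity), Fin.sum_univ_three]
    simp only [Real.norm_eq_abs, sq_abs]
    nlinarith [sq_nonneg (e 2)]
  have hwnorm : ‖w‖ ≤ ω * ‖e‖ + ω ^ 2 * dr x := by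
    have hsplit : w = Frot ω (Frot ω x) + Frot ω e := by
      ext i
      fin_cases i <;>
        simp [hw, hv, frot_apply0, frot_apply1, frot_apply2, Frot, vec3,
          PiLp.add_apply, smul_eq_mul] <;> ring
    rw [hsplit]
    refine (norm_add_le _ _).trans ?_
    have h1 : ‖Frot ω (Frot ω x)‖ = ω ^ 2 * dr x := by
      rw [norm_frot ω hω.le, frot_apply0, frot_apply1, dr]
      rw [show (-ω * x 1) ^ 2 + (ω * x 0) ^ 2 = ω ^ 2 * (x 0 ^ 2 + x 1 ^ 2) by ring]
      rw [Real.sqrt_mul (sq_nonneg ω), Real.sqrt_sq hω.le]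
      ring
    have h2 : ‖Frot ω e‖ ≤ ω * ‖e‖ := by
      rw [norm_frot ω hω.le]
      have := (Real.sqrt_le_sqrt hee).trans_eq (Real.sqrt_sq (norm_nonneg e))
      exact mul_le_mul_of_nonneg_left this hω.le
    linarith
  set C : ℝ := ω * ‖e‖ + ω ^ 2 * dr x with hC
  have hdr : 0 ≤ dr x := Real.sqrt_nonneg _
  have hb : ∀ s ∈ Set.Icc (0:ℝ) t, ‖e - s • w‖ ≤ ‖e‖ + s * C := by
    intro s hs
    calc ‖e - s • w‖ ≤ ‖e‖ + ‖s • w‖ := norm_sub_le _ _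
      _ = ‖e‖ + |s| * ‖w‖ := by rw [norm_smul, Real.norm_eq_abs]
      _ = ‖e‖ + s * ‖w‖ := by rw [abs_of_nonneg hs.1]
      _ ≤ ‖e‖ + s * C := by
          exact add_le_add_right (mul_le_mul_of_nonneg_left hwnorm hs.1) _
  have hint : Dtrav ω x v t ≤ ∫ s in (0:ℝ)..t, (‖e‖ + s * C) := by
    rw [Dtrav]
    simp only [key]
    apply intervalIntegral.integral_mono_on ht ?_ ?_ hb
    · exact ((continuous_const.sub (continuous_id.smul continuous_const)).norm).intervalIntegrable _ _
    · exact (continuous_const.add (continuous_id.mul continuous_const)).intervalIntegrable _ _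
  have hval : (∫ s in (0:ℝ)..t, (‖e‖ + s * C)) = ‖e‖ * t + C * (t ^ 2 / 2) := by
    have h2 : IntervalIntegrable (fun s : ℝ => s * C) MeasureTheory.volume 0 t :=
      (continuous_id.mul continuous_const).intervalIntegrable 0 t
    rw [intervalIntegral.integral_add intervalIntegrable_const h2,
      intervalIntegral.integral_const, intervalIntegral.integral_mul_const,
      integral_id]
    simp; ring
  calc Dtrav ω x v t ≤ _ := hint
    _ = ‖e‖ * t + C * (t ^ 2 / 2) := hval
    _ = ‖e‖ * (t + ω * t ^ 2 / 2) + ω ^ 2 * t ^ 2 / 2 * dr x := by rw [hC]; ring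
end

section
/- Let ω > 0, C > 0 and M ≥ 0. There exists N₁ = N₁(C, ω, M) > 0 such that for every x, e ∈ ℝ³ with ‖e‖ ≤ M and d_r(x) > N₁, setting v = F_ω(x) + e and t₀ = C/√(d_r(x)), the following three statements hold: (i) D_{x,v}^ω(t₀) ≤ ω² C²; (ii) d_r(x + t₀ v) − d_r(x) ≥ ω² C²/6; and (iii) for every t ≥ t₀, d_r(x + t v) − d_r(x) ≥ ω² C²/6. -/
lemma Frot_linear (ω s : ℝ) (x v : EuclideanSpace ℝ (Fin 3)) :
    Frot ω (x + s • v) = Frot ω x + s • Frot ω v := by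
  ext i
  fin_cases i <;>
    simp [Frot, vec3, PiLp.add_apply, PiLp.smul_apply, smul_eq_mul] <;> ring

lemma norm_Frot (ω : ℝ) (hω : 0 ≤ ω) (y : EuclideanSpace ℝ (Fin 3)) :
    ‖Frot ω y‖ = ω * dr y := by
  rw [EuclideanSpace.norm_eq, dr, Fin.sum_univ_three]
  simp only [Frot, vec3, Matrix.cons_val_zero, Matrix.cons_val_one, Matrix.head_cons,
    Real.norm_eq_abs, sq_abs, Matrix.cons_val_two, Matrix.tail_cons]
  rw [show (-ω*y 1)^2 + (ω*y 0)^2 + (0:ℝ)^2 = ω^2*(y 0^2 + y 1^2) by ring,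
      Real.sqrt_mul (sq_nonneg ω), Real.sqrt_sq hω]

lemma dr_le_norm (y : EuclideanSpace ℝ (Fin 3)) : dr y ≤ ‖y‖ := by
  rw [EuclideanSpace.norm_eq, dr, Fin.sum_univ_three]
  apply Real.sqrt_le_sqrt
  simp only [Real.norm_eq_abs, sq_abs]
  nlinarith [sq_nonneg (y 2)]

set_option maxHeartbeats 1000000 in
lemma key_ineq (ω C M u t : ℝ) (hω : 0 < ω) (hC : 0 < C) (hM : 0 ≤ M)
    (h1 : 1 ≤ u) (h2 : 9*M ≤ ω*u) (h3 : 9*M ≤ ω^2*C*u) (h4 : ω*C ≤ u)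
    (ht : C/u ≤ t) :
    u^2*ω^2*C^2/3 + ω^4*C^4/36 ≤ t^2*(ω^2*u^4 - 2*ω*M*u^2) - 2*M*u^2*t := by
  have hu0 : 0 < u := lt_of_lt_of_le one_pos h1
  set t₀ := C/u with ht₀
  have ht₀pos : 0 < t₀ := by positivity
  have fu : u ≤ u^2 := by nlinarith
  have hstep1 : u^2*ω^2*C^2/3 + ω^4*C^4/36 ≤ t₀^2*(ω^2*u^4 - 2*ω*M*u^2) - 2*M*u^2*t₀ := by
    have e1 : t₀^2*(ω^2*u^4 - 2*ω*M*u^2) - 2*M*u^2*t₀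
        = ω^2*C^2*u^2 - 2*ω*M*C^2 - 2*M*C*u := by
      rw [ht₀]; field_simp
    rw [e1]
    have fA : 2*ω*M*C^2 ≤ (2/9)*ω^2*C^2*u^2 := by
      nlinarith [mul_le_mul_of_nonneg_left h2 (show (0:ℝ) ≤ 2*ω*C^2/9 by positivity),
        mul_le_mul_of_nonneg_left fu (show (0:ℝ) ≤ (2/9)*ω^2*C^2 by positivity)]
    have fB : 2*M*C*u ≤ (2/9)*ω^2*C^2*u^2 := by
      nlinarith [mul_le_mul_of_nonneg_left h3 (show (0:ℝ) ≤ 2*C*u/9 by positivity)]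
    have fC : ω^4*C^4/36 ≤ (2/9)*ω^2*C^2*u^2 := by
      nlinarith [mul_le_mul_of_nonneg_left (mul_le_mul h4 h4 (by positivity) hu0.le)
        (show (0:ℝ) ≤ ω^2*C^2/36 by positivity)]
    linarith
  have hωu2 : 9*M ≤ ω*u^2 := by nlinarith [mul_le_mul_of_nonneg_left fu hω.le]
  have hA : 0 ≤ ω^2*u^4 - 2*ω*M*u^2 := by
    nlinarith [mul_le_mul_of_nonneg_left hωu2 (show (0:ℝ) ≤ ω*u^2 by positivity),
      sq_nonneg u, mul_nonneg (mul_nonneg hω.le (sq_nonneg u)) hM]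
  have hB : 2*M*u^2 ≤ 2*t₀*(ω^2*u^4 - 2*ω*M*u^2) := by
    have e2 : 2*t₀*(ω^2*u^4 - 2*ω*M*u^2) = 2*C*ω^2*u^3 - 4*ω*M*C*u := by
      rw [ht₀]; field_simp; ring
    rw [e2]
    have g1 : 9*M*u^2 ≤ ω^2*C*u^3 := by nlinarith [mul_le_mul_of_nonneg_left h3 (sq_nonneg u)]
    have g2 : 4*ω*M*C*u ≤ 4*M*u^2 := by
      nlinarith [mul_le_mul_of_nonneg_left h4 (show (0:ℝ) ≤ 4*M*u by positivity)]
    nlinarith [mul_nonneg hM (sq_nonneg u)]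
  set A := ω^2*u^4 - 2*ω*M*u^2 with hAdef
  have hC1 : 0 ≤ (t - t₀) * ((t + t₀)*A - 2*M*u^2) := by
    apply mul_nonneg (by linarith)
    have e4 : (t + t₀)*A = 2*t₀*A + (t - t₀)*A := by ring
    have h5 : 0 ≤ (t - t₀)*A := mul_nonneg (by linarith) hA
    linarith
  have e3 : t^2*A - 2*M*u^2*t
      = (t₀^2*A - 2*M*u^2*t₀) + (t - t₀) * ((t + t₀)*A - 2*M*u^2) := by ring
  rw [e3]
  exact le_trans hstep1 (le_add_of_nonneg_right hC1)

set_option maxHeartbeats 1000000 in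
lemma sq_bound (ω C M u t a b f g : ℝ) (hω : 0 < ω) (hC : 0 < C) (hM : 0 ≤ M)
    (h1 : 1 ≤ u) (h2 : 9*M ≤ ω*u) (h3 : 9*M ≤ ω^2*C*u) (h4 : ω*C ≤ u)
    (ht : C/u ≤ t) (hab : a^2 + b^2 = u^4) (hfg : f^2 + g^2 ≤ M^2) :
    (u^2 + ω^2*C^2/6)^2 ≤ (a + t*(-ω*b + f))^2 + (b + t*(ω*a + g))^2 := by
  have hu0 : 0 < u := lt_of_lt_of_le one_pos h1
  have htpos : 0 < t := lt_of_lt_of_le (by positivity) ht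
  have hP : -(M*u^2) ≤ a*f + b*g := by
    nlinarith [sq_nonneg (a*g - b*f), sq_nonneg (a*f + b*g + M*u^2),
      mul_nonneg hM (sq_nonneg u), sq_nonneg u]
  have hQ : -(M*u^2) ≤ a*g - b*f := by
    nlinarith [sq_nonneg (a*f + b*g), sq_nonneg (a*g - b*f + M*u^2),
      mul_nonneg hM (sq_nonneg u), sq_nonneg u]
  have hkey := key_ineq ω C M u t hω hC hM h1 h2 h3 h4 ht
  have hexp : (a + t*(-ω*b + f))^2 + (b + t*(ω*a + g))^2
      = u^4 + 2*t*(a*f + b*g) + t^2*(ω^2*u^4 + 2*ω*(a*g - b*f) + (f^2 + g^2)) := by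
    linear_combination (1 + t^2*ω^2) * hab
  have h6 : 0 ≤ 2*t*((a*f + b*g) + M*u^2) := mul_nonneg (by linarith) (by linarith)
  have h7 : 0 ≤ t^2*(2*ω*(a*g - b*f) + 2*ω*M*u^2) := by
    apply mul_nonneg (sq_nonneg t)
    nlinarith [mul_le_mul_of_nonneg_left hQ hω.le]
  have h8 : 0 ≤ t^2*(f^2 + g^2) := by positivity
  rw [hexp]
  nlinarith [hkey, h6, h7, h8]

lemma dtrav_arith (ω C M u : ℝ) (hω : 0 < ω) (hC : 0 < C) (hM : 0 ≤ M)
    (h1 : 1 ≤ u) (h3 : 9*M ≤ ω^2*C*u) (h4 : ω*C ≤ u) :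
    M * (C/u) + ω * (ω * u^2 + M) * ((C/u)^2/2) ≤ ω^2*C^2 := by
  have hu0 : 0 < u := lt_of_lt_of_le one_pos h1
  have e3 : M * (C/u) + ω * (ω * u^2 + M) * ((C/u)^2/2)
      = (2*M*C*u + ω^2*C^2*u^2 + ω*M*C^2)/(2*u^2) := by
    field_simp; ring
  rw [e3, div_le_iff₀ (by positivity)]
  have g1 : 9*M*C*u ≤ ω^2*C^2*u^2 := by
    nlinarith [mul_le_mul_of_nonneg_left h3 (show (0:ℝ) ≤ C*u by positivity)]
  have g2 : ω*M*C^2 ≤ M*C*u := by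
    nlinarith [mul_le_mul_of_nonneg_left h4 (show (0:ℝ) ≤ M*C by positivity)]
  nlinarith [mul_nonneg (mul_nonneg hM hC.le) hu0.le]

set_option maxHeartbeats 1000000 in
theorem stmt_4 (ω C M : ℝ) (hω : 0 < ω) (hC : 0 < C) (hM : 0 ≤ M) :
    ∃ N₁ : ℝ, 0 < N₁ ∧
      ∀ x e : EuclideanSpace ℝ (Fin 3), ‖e‖ ≤ M → dr x > N₁ →
        Dtrav ω x (Frot ω x + e) (C / Real.sqrt (dr x)) ≤ ω ^ 2 * C ^ 2 ∧
        dr (x + (C / Real.sqrt (dr x)) • (Frot ω x + e)) - dr x ≥ ω ^ 2 * C ^ 2 / 6 ∧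
        ∀ t : ℝ, t ≥ C / Real.sqrt (dr x) →
          dr (x + t • (Frot ω x + e)) - dr x ≥ ω ^ 2 * C ^ 2 / 6 := by
  refine ⟨(1 + 9*M/ω + 9*M/(ω^2*C) + ω*C)^2, by positivity, ?_⟩
  intro x e he hx
  set r := dr x with hrdef
  have hx' : (1 + 9*M/ω + 9*M/(ω^2*C) + ω*C)^2 < r := hx
  have hu₀0 : (0:ℝ) < 1 + 9*M/ω + 9*M/(ω^2*C) + ω*C := by positivity
  have hr0 : 0 < r := lt_trans (by positivity) hx'
  set u := Real.sqrt r with hu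
  have hu0 : 0 < u := Real.sqrt_pos.mpr hr0
  have hru : r = u^2 := (Real.sq_sqrt hr0.le).symm
  have huu : 1 + 9*M/ω + 9*M/(ω^2*C) + ω*C < u := by
    have h := Real.sqrt_lt_sqrt (by positivity) hx'
    rwa [Real.sqrt_sq hu₀0.le] at h
  have hq1 : (0:ℝ) ≤ 9*M/ω := by positivity
  have hq2 : (0:ℝ) ≤ 9*M/(ω^2*C) := by positivity
  have hq3 : (0:ℝ) ≤ ω*C := by positivity
  have h1 : 1 ≤ u := by linarith
  have h2 : 9*M ≤ ω*u := by
    have hd : 9*M/ω ≤ u := by linarith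
    rw [div_le_iff₀ hω] at hd; linarith
  have h3 : 9*M ≤ ω^2*C*u := by
    have hd : 9*M/(ω^2*C) ≤ u := by linarith
    rw [div_le_iff₀ (by positivity)] at hd; linarith
  have h4 : ω*C ≤ u := by linarith
  set v := Frot ω x + e with hv
  have hab : x 0 ^ 2 + x 1 ^ 2 = u^4 := by
    have h' : r ^ 2 = x 0 ^ 2 + x 1 ^ 2 := by
      rw [hrdef, dr]; exact Real.sq_sqrt (by positivity)
    rw [← h', hru]; ring
  have hefg : e 0 ^ 2 + e 1 ^ 2 ≤ M^2 := by
    have h' : ‖e‖^2 = e 0 ^2 + e 1 ^2 + e 2 ^2 := by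
      rw [EuclideanSpace.norm_eq, Fin.sum_univ_three, Real.sq_sqrt (by positivity)]
      simp [sq_abs]
    nlinarith [sq_nonneg (e 2), norm_nonneg e]
  have main : ∀ t : ℝ, C/u ≤ t → ω ^ 2 * C ^ 2 / 6 ≤ dr (x + t • v) - r := by
    intro t ht
    have hv0 : v 0 = -ω * x 1 + e 0 := by
      rw [hv]; simp [Frot, vec3, PiLp.add_apply]
    have hv1 : v 1 = ω * x 0 + e 1 := by
      rw [hv]; simp [Frot, vec3, PiLp.add_apply]
    have hc0 : (x + t • v) 0 = x 0 + t * (-ω * x 1 + e 0) := by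
      rw [PiLp.add_apply, PiLp.smul_apply, hv0, smul_eq_mul]
    have hc1 : (x + t • v) 1 = x 1 + t * (ω * x 0 + e 1) := by
      rw [PiLp.add_apply, PiLp.smul_apply, hv1, smul_eq_mul]
    have hdr : dr (x + t • v)
        = Real.sqrt ((x 0 + t * (-ω * x 1 + e 0))^2 + (x 1 + t * (ω * x 0 + e 1))^2) := by
      rw [dr, hc0, hc1]
    have hfinal := sq_bound ω C M u t (x 0) (x 1) (e 0) (e 1) hω hC hM h1 h2 h3 h4 ht hab hefg
    have hle : u^2 + ω^2*C^2/6 ≤ dr (x + t • v) := by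
      rw [hdr]
      exact (Real.le_sqrt (by positivity) (by positivity)).mpr hfinal
    rw [hru]; linarith
  refine ⟨?_, ?_, fun t ht => main t ht⟩
  · have hlin : ∀ s : ℝ, v - Frot ω (x + s • v) = e - s • Frot ω v := by
      intro s
      rw [Frot_linear, hv]
      abel
    have hnFv : ‖Frot ω v‖ ≤ ω * (ω * u^2 + M) := by
      rw [norm_Frot ω hω.le]
      have hd1 : dr v ≤ ‖v‖ := dr_le_norm v
      have hd2 : ‖v‖ ≤ ω * u^2 + M := by
        calc ‖v‖ ≤ ‖Frot ω x‖ + ‖e‖ := norm_add_le _ _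
          _ = ω * r + ‖e‖ := by rw [norm_Frot ω hω.le, ← hrdef]
          _ ≤ ω * u^2 + M := by rw [← hru]; linarith
      exact mul_le_mul_of_nonneg_left (le_trans hd1 hd2) hω.le
    set K := ω * (ω * u^2 + M) with hK
    have hKpos : 0 ≤ K := by positivity
    have ht₀pos : 0 < C/u := by positivity
    have hcont : Continuous (fun s : ℝ => ‖e - s • Frot ω v‖) := by
      apply Continuous.norm
      exact continuous_const.sub (continuous_id.smul continuous_const)
    have hptw : ∀ s ∈ Set.Icc (0:ℝ) (C/u), ‖e - s • Frot ω v‖ ≤ M + K * s := by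
      intro s hs
      calc ‖e - s • Frot ω v‖ ≤ ‖e‖ + ‖s • Frot ω v‖ := norm_sub_le _ _
        _ = ‖e‖ + |s| * ‖Frot ω v‖ := by rw [norm_smul, Real.norm_eq_abs]
        _ ≤ M + K * s := by
            rw [abs_of_nonneg hs.1]
            have h9 := mul_le_mul_of_nonneg_left hnFv hs.1
            have h10 : s * K = K * s := mul_comm _ _
            linarith [h9, he]
    have hDeq : Dtrav ω x v (C/u) = ∫ s in (0:ℝ)..(C/u), ‖e - s • Frot ω v‖ := by
      rw [Dtrav]
      congr 1
      funext s
      rw [hlin s]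
    have hIle : (∫ s in (0:ℝ)..(C/u), ‖e - s • Frot ω v‖)
        ≤ ∫ s in (0:ℝ)..(C/u), (M + K * s) := by
      exact intervalIntegral.integral_mono_on ht₀pos.le
        (hcont.intervalIntegrable 0 (C/u))
        ((continuous_const.add (continuous_const.mul continuous_id')).intervalIntegrable 0 (C/u))
        hptw
    have hIval : (∫ s in (0:ℝ)..(C/u), (M + K * s)) = M * (C/u) + K * ((C/u)^2/2) := by
      rw [intervalIntegral.integral_add (intervalIntegrable_const)
        ((continuous_const.mul continuous_id').intervalIntegrable 0 (C/u)) (f := fun _ => M) (g := fun s => K * s),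
        intervalIntegral.integral_const, intervalIntegral.integral_const_mul, integral_id]
      simp [smul_eq_mul]
      ring
    have harith := dtrav_arith ω C M u hω hC hM h1 h3 h4
    calc Dtrav ω x v (C/u) = _ := hDeq
      _ ≤ _ := hIle
      _ = _ := hIval
      _ ≤ ω^2*C^2 := harith
  · exact main (C/u) le_rfl
end

section
/- Let ω > 0, x, e ∈ ℝ³ and set v = F_ω(x) + e. Assume d_r(x) ≥ 4·d_r(e)/ω and let s ≥ 4‖e‖/(ω² d_r(x)). Then ‖v − F_ω(x + s v)‖ ≥ s ω² d_r(x)/2. -/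
lemma norm_vec3 (a b c : ℝ) : ‖vec3 a b c‖ = Real.sqrt (a ^ 2 + b ^ 2 + c ^ 2) := by
  rw [EuclideanSpace.norm_eq]
  simp [vec3, Fin.sum_univ_three, Real.norm_eq_abs, sq_abs]

lemma dr_nonneg (x : EuclideanSpace ℝ (Fin 3)) : 0 ≤ dr x := Real.sqrt_nonneg _

theorem stmt_8 (ω : ℝ) (hω : 0 < ω) (x e : EuclideanSpace ℝ (Fin 3))
    (v : EuclideanSpace ℝ (Fin 3)) (hv : v = Frot ω x + e)
    (hx : dr x ≥ 4 * dr e / ω) (s : ℝ) (hs : s ≥ 4 * ‖e‖ / (ω ^ 2 * dr x)) :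
    ‖v - Frot ω (x + s • v)‖ ≥ s * ω ^ 2 * dr x / 2 := by
  rcases eq_or_lt_of_le (dr_nonneg x) with hdx | hdx
  · -- dr x = 0 : RHS is 0
    have : s * ω ^ 2 * dr x / 2 = 0 := by rw [← hdx]; ring
    rw [this]
    exact norm_nonneg _
  · have hs0 : 0 ≤ s := le_trans (by positivity) hs
    set A : EuclideanSpace ℝ (Fin 3) := vec3 (s * ω ^ 2 * x 0) (s * ω ^ 2 * x 1) 0 with hA
    set B : EuclideanSpace ℝ (Fin 3) := vec3 (s * ω * e 1) (-(s * ω * e 0)) 0 with hB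
    have hdecomp : v - Frot ω (x + s • v) = A + (e + B) := by
      subst hv
      ext i
      fin_cases i <;>
        simp [hA, hB, Frot, vec3, PiLp.add_apply, PiLp.sub_apply, PiLp.smul_apply,
          smul_eq_mul] <;> ring
    have hnA : ‖A‖ = s * ω ^ 2 * dr x := by
      rw [hA, norm_vec3, dr]
      have : (s * ω ^ 2 * x 0) ^ 2 + (s * ω ^ 2 * x 1) ^ 2 + 0 ^ 2
          = (s * ω ^ 2) ^ 2 * (x 0 ^ 2 + x 1 ^ 2) := by ring
      rw [this, Real.sqrt_mul (sq_nonneg _), Real.sqrt_sq (by positivity)]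
    have hnB : ‖B‖ = s * ω * dr e := by
      rw [hB, norm_vec3, dr]
      have : (s * ω * e 1) ^ 2 + (-(s * ω * e 0)) ^ 2 + 0 ^ 2
          = (s * ω) ^ 2 * (e 0 ^ 2 + e 1 ^ 2) := by ring
      rw [this, Real.sqrt_mul (sq_nonneg _), Real.sqrt_sq (by positivity)]
    have htri : ‖A‖ - ‖e + B‖ ≤ ‖A + (e + B)‖ := by
      have h1 : ‖A‖ ≤ ‖A + (e + B)‖ + ‖e + B‖ := by
        calc ‖A‖ = ‖A + (e + B) + -(e + B)‖ := by rw [add_neg_cancel_right]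
        _ ≤ ‖A + (e + B)‖ + ‖-(e + B)‖ := norm_add_le _ _
        _ = ‖A + (e + B)‖ + ‖e + B‖ := by rw [norm_neg]
      linarith
    have htri2 : ‖e + B‖ ≤ ‖e‖ + ‖B‖ := norm_add_le _ _
    -- bounds
    have hbe : 4 * ‖e‖ ≤ s * (ω ^ 2 * dr x) := by
      rw [ge_iff_le, div_le_iff₀ (by positivity)] at hs
      linarith
    have hde : 4 * dr e ≤ ω * dr x := by
      rw [ge_iff_le, div_le_iff₀ hω] at hx
      linarith
    have hsde : s * ω * dr e ≤ s * ω ^ 2 * dr x / 4 := by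
      nlinarith [mul_le_mul_of_nonneg_left hde (by positivity : (0:ℝ) ≤ s * ω)]
    rw [hdecomp]
    nlinarith [norm_nonneg (e + B)]
end

section
/- Let ω > 0, M ≥ 0 and ξ > 0. There exists N₀ = N₀(ω, M, ξ) > 0 such that for every x, e ∈ ℝ³ with ‖e‖ ≤ M and d_r(x) > N₀, setting v = F_ω(x) + e, one has D_{x,v}^ω( √(ξ/(ω² d_r(x))) ) ≤ ξ and D_{x,v}^ω( 2·max{2, ξ}/(ω √(d_r(x))) ) ≥ ξ. In particular, any time t ≥ 0 at which the traveled distance D_{x,v}^ω first reaches ξ satisfies √(ξ/(ω² d_r(x))) ≤ t ≤ 2·max{2, ξ}/(ω √(d_r(x))). -/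
lemma frot_add (ω : ℝ) (x v : EuclideanSpace ℝ (Fin 3)) (s : ℝ) :
    Frot ω (x + s • v) = Frot ω x + s • Frot ω v := by
  ext i
  fin_cases i <;>
    simp [Frot, vec3, PiLp.add_apply, PiLp.smul_apply, smul_eq_mul] <;> ring

lemma norm_frot_frot (ω : ℝ) (hω : 0 ≤ ω) (x : EuclideanSpace ℝ (Fin 3)) :
    ‖Frot ω (Frot ω x)‖ = ω ^ 2 * dr x := by
  rw [norm_frot ω hω]
  have h0 : Frot ω x 0 = -ω * x 1 := by simp [Frot, vec3]
  have h1 : Frot ω x 1 = ω * x 0 := by simp [Frot, vec3]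
  rw [h0, h1, show (-ω * x 1) ^ 2 + (ω * x 0) ^ 2 = ω ^ 2 * (x 0 ^ 2 + x 1 ^ 2) by ring,
    Real.sqrt_mul (by positivity), Real.sqrt_sq hω, dr]
  ring

lemma norm_frot_le (ω : ℝ) (hω : 0 ≤ ω) (e : EuclideanSpace ℝ (Fin 3)) :
    ‖Frot ω e‖ ≤ ω * ‖e‖ := by
  rw [norm_frot ω hω, EuclideanSpace.norm_eq]
  apply mul_le_mul_of_nonneg_left _ hω
  simp only [Fin.sum_univ_three, Real.norm_eq_abs, sq_abs]
  exact Real.sqrt_le_sqrt (by nlinarith [sq_nonneg (e 2)])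

lemma w_bounds (ω : ℝ) (hω : 0 ≤ ω) (x e : EuclideanSpace ℝ (Fin 3)) :
    ω ^ 2 * dr x - ω * ‖e‖ ≤ ‖Frot ω (Frot ω x + e)‖ ∧
    ‖Frot ω (Frot ω x + e)‖ ≤ ω ^ 2 * dr x + ω * ‖e‖ := by
  have hsplit : Frot ω (Frot ω x + e) = Frot ω (Frot ω x) + Frot ω e := by
    have := frot_add ω (Frot ω x) e 1
    simpa using this
  rw [hsplit]
  have h1 := norm_frot_le ω hω e
  have h2 := norm_frot_frot ω hω x
  have h3 : ‖Frot ω (Frot ω x)‖ - ‖Frot ω e‖ ≤ ‖Frot ω (Frot ω x) + Frot ω e‖ := by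
    have h := norm_sub_le (Frot ω (Frot ω x) + Frot ω e) (Frot ω e)
    simp only [add_sub_cancel_right] at h
    linarith
  have h4 : ‖Frot ω (Frot ω x) + Frot ω e‖ ≤ ‖Frot ω (Frot ω x)‖ + ‖Frot ω e‖ := norm_add_le _ _
  constructor <;> linarith

lemma dtrav_eq (ω : ℝ) (x e : EuclideanSpace ℝ (Fin 3)) (t : ℝ) :
    Dtrav ω x (Frot ω x + e) t = ∫ s in (0:ℝ)..t, ‖e - s • Frot ω (Frot ω x + e)‖ := by
  unfold Dtrav
  congr 1
  funext s
  rw [frot_add]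
  congr 1
  abel

lemma cont_integrand (e w : EuclideanSpace ℝ (Fin 3)) (a b : ℝ) :
    IntervalIntegrable (fun s => ‖e - s • w‖) MeasureTheory.volume a b := by
  apply Continuous.intervalIntegrable
  exact (continuous_const.sub (continuous_id.smul continuous_const)).norm

lemma integral_linear (A B t : ℝ) :
    ∫ s in (0:ℝ)..t, (A * s + B) = A * t ^ 2 / 2 + B * t := by
  rw [intervalIntegral.integral_add ((intervalIntegral.intervalIntegrable_id).const_mul A)
    (intervalIntegrable_const), intervalIntegral.integral_const_mul, integral_id,
    intervalIntegral.integral_const]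
  simp; ring

lemma dtrav_upper (e w : EuclideanSpace ℝ (Fin 3)) (t : ℝ) (ht : 0 ≤ t) :
    (∫ s in (0:ℝ)..t, ‖e - s • w‖) ≤ ‖w‖ * t ^ 2 / 2 + ‖e‖ * t := by
  rw [← integral_linear ‖w‖ ‖e‖ t]
  apply intervalIntegral.integral_mono_on ht (cont_integrand e w 0 t)
  · exact ((continuous_const.mul continuous_id).add continuous_const).intervalIntegrable 0 t
  · intro s hs
    calc ‖e - s • w‖ ≤ ‖s • w‖ + ‖e‖ := by
          rw [norm_sub_rev]; exact norm_sub_le _ _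
      _ = ‖w‖ * s + ‖e‖ := by
          rw [norm_smul, Real.norm_eq_abs, abs_of_nonneg hs.1]; ring

lemma dtrav_lower (e w : EuclideanSpace ℝ (Fin 3)) (t : ℝ) (ht : 0 ≤ t) :
    ‖w‖ * t ^ 2 / 2 + (-‖e‖) * t ≤ ∫ s in (0:ℝ)..t, ‖e - s • w‖ := by
  rw [← integral_linear ‖w‖ (-‖e‖) t]
  apply intervalIntegral.integral_mono_on ht
    (((continuous_const.mul continuous_id).add continuous_const).intervalIntegrable 0 t)
    (cont_integrand e w 0 t)
  intro s hs
  calc ‖w‖ * s + -‖e‖ = ‖s • w‖ - ‖e‖ := by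
        rw [norm_smul, Real.norm_eq_abs, abs_of_nonneg hs.1]; ring
    _ ≤ ‖s • w - e‖ := norm_sub_norm_le _ _
    _ = ‖e - s • w‖ := norm_sub_rev _ _

lemma le_of_sq_le_sq' (a b : ℝ) (ha : 0 ≤ a) (hb : 0 ≤ b) (h : a ^ 2 ≤ b ^ 2) : a ≤ b := by
  nlinarith

lemma lt_of_sq_lt_sq' (a b : ℝ) (ha : 0 ≤ a) (hb : 0 ≤ b) (h : a ^ 2 < b ^ 2) : a < b := by
  nlinarith

set_option maxHeartbeats 1000000 in
theorem stmt_9 (ω M ξ : ℝ) (hω : 0 < ω) (hM : 0 ≤ M) (hξ : 0 < ξ) :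
    ∃ N₀ : ℝ, 0 < N₀ ∧
      ∀ x e : EuclideanSpace ℝ (Fin 3), ‖e‖ ≤ M → dr x > N₀ →
        Dtrav ω x (Frot ω x + e) (Real.sqrt (ξ / (ω ^ 2 * dr x))) ≤ ξ ∧
        Dtrav ω x (Frot ω x + e) (2 * max 2 ξ / (ω * Real.sqrt (dr x))) ≥ ξ ∧
        ∀ t : ℝ, 0 ≤ t → Dtrav ω x (Frot ω x + e) t = ξ →
          (∀ s : ℝ, 0 ≤ s → s < t → Dtrav ω x (Frot ω x + e) s < ξ) →
          Real.sqrt (ξ / (ω ^ 2 * dr x)) ≤ t ∧ t ≤ 2 * max 2 ξ / (ω * Real.sqrt (dr x)) := by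
  set m := max 2 ξ with hm_def
  have hm2 : (2:ℝ) ≤ m := le_max_left _ _
  have hmξ : ξ ≤ m := le_max_right _ _
  have hm0 : (0:ℝ) < m := by linarith
  refine ⟨1 + 2*M/ω + 16*M^2/(ω^2*ξ) + 2*m^2*M/(ω*ξ) + 4*M^2*m^2/(ω^2*ξ^2), by positivity, ?_⟩
  intro x e hE hd
  set d := dr x with hd_def
  have ha1 : (0:ℝ) ≤ 2*M/ω := by positivity
  have ha2 : (0:ℝ) ≤ 16*M^2/(ω^2*ξ) := by positivity
  have ha3 : (0:ℝ) ≤ 2*m^2*M/(ω*ξ) := by positivity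
  have ha4 : (0:ℝ) ≤ 4*M^2*m^2/(ω^2*ξ^2) := by positivity
  have hd1 : (1:ℝ) < d := by linarith
  have hd0 : (0:ℝ) < d := by linarith
  have hc1 : 2*M < ω*d := by
    have : 2*M/ω < d := by linarith
    calc 2*M = (2*M/ω)*ω := by field_simp
      _ < d*ω := by exact mul_lt_mul_of_pos_right this hω
      _ = ω*d := by ring
  have hc2 : 16*M^2 < ω^2*ξ*d := by
    have h : 16*M^2/(ω^2*ξ) < d := by linarith
    calc 16*M^2 = (16*M^2/(ω^2*ξ))*(ω^2*ξ) := by field_simp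
      _ < d*(ω^2*ξ) := mul_lt_mul_of_pos_right h (by positivity)
      _ = ω^2*ξ*d := by ring
  have hc3 : 2*m^2*M < ω*ξ*d := by
    have h : 2*m^2*M/(ω*ξ) < d := by linarith
    calc 2*m^2*M = (2*m^2*M/(ω*ξ))*(ω*ξ) := by field_simp
      _ < d*(ω*ξ) := mul_lt_mul_of_pos_right h (by positivity)
      _ = ω*ξ*d := by ring
  have hc4 : 4*M^2*m^2 < ω^2*ξ^2*d := by
    have h : 4*M^2*m^2/(ω^2*ξ^2) < d := by linarith
    calc 4*M^2*m^2 = (4*M^2*m^2/(ω^2*ξ^2))*(ω^2*ξ^2) := by field_simp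
      _ < d*(ω^2*ξ^2) := mul_lt_mul_of_pos_right h (by positivity)
      _ = ω^2*ξ^2*d := by ring
  have hE0 : (0:ℝ) ≤ ‖e‖ := norm_nonneg _
  set w := Frot ω (Frot ω x + e) with hw_def
  obtain ⟨hwb1, hwb2⟩ := w_bounds ω hω.le x e
  have hA1 : ω^2*d - ω*M ≤ ‖w‖ := by
    have : ω*‖e‖ ≤ ω*M := mul_le_mul_of_nonneg_left hE hω.le
    rw [hw_def]; rw [hd_def]; linarith
  have hA2 : ‖w‖ ≤ ω^2*d + ω*M := by
    have : ω*‖e‖ ≤ ω*M := mul_le_mul_of_nonneg_left hE hω.le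
    rw [hw_def]; rw [hd_def]; linarith
  have hD : ∀ τ : ℝ, Dtrav ω x (Frot ω x + e) τ = ∫ s in (0:ℝ)..τ, ‖e - s • w‖ :=
    fun τ => dtrav_eq ω x e τ
  -- t₁
  set t₁ := Real.sqrt (ξ / (ω ^ 2 * d)) with ht1_def
  have ht1pos : 0 < t₁ := Real.sqrt_pos.mpr (by positivity)
  have ht1sq : ω^2*d*t₁^2 = ξ := by
    rw [ht1_def, Real.sq_sqrt (by positivity : (0:ℝ) ≤ ξ / (ω ^ 2 * d))]
    field_simp
  -- t₂
  set r := Real.sqrt d with hr_def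
  have hrpos : 0 < r := Real.sqrt_pos.mpr hd0
  have hrsq : r^2 = d := Real.sq_sqrt hd0.le
  set t₂ := 2 * m / (ω * r) with ht2_def
  have ht2pos : 0 < t₂ := by positivity
  have ht2sq : ω^2*d*t₂^2 = 4*m^2 := by
    rw [ht2_def, div_pow, ← hrsq]
    field_simp
    ring
  -- key small-term bounds
  have hMt1 : M * t₁ ≤ ξ/4 := by
    apply le_of_sq_le_sq' _ _ (by positivity) (by positivity)
    have h1 : 16*M^2*t₁^2 ≤ (ω^2*ξ*d)*t₁^2 :=
      mul_le_mul_of_nonneg_right hc2.le (sq_nonneg t₁)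
    have h2 : ω^2*ξ*d*t₁^2 = ξ^2 := by linear_combination ξ * ht1sq
    linarith
  have part1 : Dtrav ω x (Frot ω x + e) t₁ ≤ ξ := by
    rw [hD t₁]
    have hub := dtrav_upper e w t₁ ht1pos.le
    have k1 : 2*M*(ω*t₁^2) ≤ ξ := by
      have h := mul_le_mul_of_nonneg_right hc1.le
        (mul_nonneg hω.le (sq_nonneg t₁))
      linarith [ht1sq]
    have k2 : ‖w‖*t₁^2 ≤ (ω^2*d + ω*M)*t₁^2 :=
      mul_le_mul_of_nonneg_right hA2 (sq_nonneg t₁)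
    have k3 : ‖e‖*t₁ ≤ M*t₁ := mul_le_mul_of_nonneg_right hE ht1pos.le
    linarith [ht1sq]
  have part2 : Dtrav ω x (Frot ω x + e) t₂ ≥ ξ := by
    rw [hD t₂]
    have hlb := dtrav_lower e w t₂ ht2pos.le
    have hωd : (0:ℝ) < ω*d := mul_pos hω hd0
    have k1 : ω*M*t₂^2 ≤ 2*ξ := by
      have h2 : (ω*M*t₂^2)*(ω*d) ≤ (2*ξ)*(ω*d) := by
        have e1 : (ω*M*t₂^2)*(ω*d) = 4*m^2*M := by linear_combination M * ht2sq
        rw [e1]; linarith [hc3]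
      exact le_of_mul_le_mul_right h2 hωd
    have k2 : M*t₂ ≤ ξ := by
      apply le_of_sq_le_sq' _ _ (by positivity) hξ.le
      have h2 : ((M*t₂)^2)*(ω^2*d) ≤ (ξ^2)*(ω^2*d) := by
        have e1 : ((M*t₂)^2)*(ω^2*d) = 4*M^2*m^2 := by linear_combination M^2 * ht2sq
        rw [e1]; linarith [hc4]
      exact le_of_mul_le_mul_right h2 (by positivity)
    have k3 : (ω^2*d - ω*M)*t₂^2 ≤ ‖w‖*t₂^2 :=
      mul_le_mul_of_nonneg_right hA1 (sq_nonneg t₂)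
    have k4 : ‖e‖*t₂ ≤ M*t₂ := mul_le_mul_of_nonneg_right hE ht2pos.le
    have km : 2*ξ ≤ m^2 := by
      linarith [mul_le_mul_of_nonneg_left hm2 hm0.le, hmξ]
    linarith [ht2sq]
  refine ⟨part1, part2, ?_⟩
  intro t ht0 htD hfirst
  constructor
  · by_contra hcon
    push_neg at hcon
    -- hcon : t < t₁
    have hb2 : 2*(ω*M) ≤ ω^2*d := by
      have := mul_le_mul_of_nonneg_left hc1.le hω.le
      linarith
    have hB0 : (0:ℝ) ≤ ω^2*d - ω*M := by
      have := mul_nonneg hω.le hM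
      linarith
    set a := max t (t₁/2) with ha_def
    have hat1 : a < t₁ := max_lt hcon (by linarith)
    have ha0 : (0:ℝ) ≤ a := le_trans (by linarith) (le_max_right t (t₁/2))
    have hta : t ≤ a := le_max_left _ _
    have hahalf : t₁/2 ≤ a := le_max_right _ _
    set c := (ω^2*d - ω*M)*(t₁/2) - M with hc_def
    have hcpos : 0 < c := by
      have h1 : M < ω^2*d*t₁/4 := by
        apply lt_of_sq_lt_sq' _ _ hM (by positivity)
        have h2 : ω^2*ξ*d = ω^4*d^2*t₁^2 := by linear_combination (-(ω^2*d)) * ht1sq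
        have h3 : (ω^2*d*t₁/4)^2 = ω^4*d^2*t₁^2/16 := by ring
        linarith [hc2]
      have h2 : ω^2*d*t₁/4 ≤ (ω^2*d - ω*M)*(t₁/2) := by
        have h4 : 0 ≤ (ω^2*d - 2*(ω*M))*t₁ := mul_nonneg (by linarith) ht1pos.le
        linarith [h4]
      rw [hc_def]
      linarith
    have hsplit1 : (∫ s in (0:ℝ)..t₁, ‖e - s • w‖) =
        (∫ s in (0:ℝ)..t, ‖e - s • w‖) + ∫ s in t..t₁, ‖e - s • w‖ :=
      (intervalIntegral.integral_add_adjacent_intervals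
        (cont_integrand e w 0 t) (cont_integrand e w t t₁)).symm
    have hsplit2 : (∫ s in t..t₁, ‖e - s • w‖) =
        (∫ s in t..a, ‖e - s • w‖) + ∫ s in a..t₁, ‖e - s • w‖ :=
      (intervalIntegral.integral_add_adjacent_intervals
        (cont_integrand e w t a) (cont_integrand e w a t₁)).symm
    have hnn : (0:ℝ) ≤ ∫ s in t..a, ‖e - s • w‖ :=
      intervalIntegral.integral_nonneg hta (fun s _ => norm_nonneg _)
    have hlast : c * (t₁ - a) ≤ ∫ s in a..t₁, ‖e - s • w‖ := by
      have hmono : (∫ s in a..t₁, (c:ℝ)) ≤ ∫ s in a..t₁, ‖e - s • w‖ := by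
        apply intervalIntegral.integral_mono_on hat1.le intervalIntegrable_const
          (cont_integrand e w a t₁)
        intro s hs
        have hs0 : (0:ℝ) ≤ s := le_trans ha0 hs.1
        have g1 : ‖s • w‖ - ‖e‖ ≤ ‖e - s • w‖ := by
          rw [norm_sub_rev]; exact norm_sub_norm_le _ _
        have g2 : ‖s • w‖ = s * ‖w‖ := by
          rw [norm_smul, Real.norm_eq_abs, abs_of_nonneg hs0]
        have g3 : (ω^2*d - ω*M) * s ≤ ‖w‖ * s := mul_le_mul_of_nonneg_right hA1 hs0
        have g4 : (ω^2*d - ω*M) * (t₁/2) ≤ (ω^2*d - ω*M) * s := by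
          apply mul_le_mul_of_nonneg_left _ hB0
          linarith [hs.1]
        rw [hc_def]
        linarith
      rw [intervalIntegral.integral_const, smul_eq_mul] at hmono
      linarith [hmono]
    have : ξ < Dtrav ω x (Frot ω x + e) t₁ := by
      rw [hD t₁, hsplit1, hsplit2, ← hD t, htD]
      have : 0 < c * (t₁ - a) := mul_pos hcpos (by linarith)
      linarith
    linarith
  · by_contra hcon
    push_neg at hcon
    have := hfirst t₂ ht2pos.le hcon
    linarith
end
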